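/- (Fortuin–Kasteleyn-type representation.) For a graph G with magnetic field vector M_i ∈ ℂ^q at each vertex and variable-field Potts Hamiltonian, Z(G) = Σ_{A ⊆ E(G)} X_{M_{C_1}} ⋯ X_{M_{C_{k(A)}}} · ∏_{e∈A} (e^{β J_e} − 1), where M_{C_l} is the sum of the vectors M_i over vertices in the l-th connected component of the spanning subgraph (V(G), A), and X_M = Σ_{α=1}^q e^{β M_α}. -/
import Mathlib


open Finset

structure WGraph (S : Type) (L : Type) where
  V : Type
  E : Type
  [fV : Fintype V]
  [dV : DecidableEq V]
  [fE : Fintype E]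
  [dE : DecidableEq E]
  ends : E → V × V
  ω : V → S
  γ : E → L

attribute [instance] WGraph.fV WGraph.dV WGraph.fE WGraph.dE

namespace WGraph
variable {S L : Type}

def IsLoop (G : WGraph S L) (e : G.E) : Prop := (G.ends e).1 = (G.ends e).2

def delete (G : WGraph S L) (e₀ : G.E) : WGraph S L where
  V := G.V
  E := {e : G.E // e ≠ e₀}
  ends := fun e => G.ends e.1
  ω := G.ω
  γ := fun e => G.γ e.1

def contract [Add S] (G : WGraph S L) (e₀ : G.E) (h : ¬ G.IsLoop e₀) : WGraph S L where
  V := {v : G.V // v ≠ (G.ends e₀).2}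
  E := {e : G.E // e ≠ e₀}
  ends := fun e =>
    ((if hv : (G.ends e.1).1 = (G.ends e₀).2 then ⟨(G.ends e₀).1, h⟩
        else ⟨(G.ends e.1).1, hv⟩ : {v : G.V // v ≠ (G.ends e₀).2}),
     (if hv : (G.ends e.1).2 = (G.ends e₀).2 then ⟨(G.ends e₀).1, h⟩
        else ⟨(G.ends e.1).2, hv⟩))
  ω := fun v =>
    if v.1 = (G.ends e₀).1 then G.ω (G.ends e₀).1 + G.ω (G.ends e₀).2 else G.ω v.1
  γ := fun e => G.γ e.1

def mapEdges {L' : Type} (G : WGraph S L) (φ : L → L') : WGraph S L' where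
  V := G.V
  E := G.E
  ends := G.ends
  ω := G.ω
  γ := φ ∘ G.γ

def stateGraph (G : WGraph S L) (A : Finset G.E) : SimpleGraph G.V :=
  SimpleGraph.fromRel (fun v w => ∃ e ∈ A, G.ends e = (v, w))

noncomputable instance (G : WGraph S L) (A : Finset G.E) :
    Fintype (G.stateGraph A).ConnectedComponent := Fintype.ofFinite _

noncomputable def kcomp (G : WGraph S L) (A : Finset G.E) : ℕ :=
  Fintype.card (G.stateGraph A).ConnectedComponent

open scoped Classical in
noncomputable def compWeight [AddCommMonoid S] (G : WGraph S L) (A : Finset G.E)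
    (c : (G.stateGraph A).ConnectedComponent) : S :=
  ∑ v ∈ Finset.univ.filter (fun v => (G.stateGraph A).connectedComponentMk v = c), G.ω v

end WGraph

/-- The variable-field q-state Potts Hamiltonian:
`h(σ) = -Σ_{e={i,j}} J_e δ(σ_i,σ_j) - Σ_i Σ_α M_{i,α} δ(α,σ_i)`. -/
noncomputable def pottsH (q : ℕ) (G : WGraph (Fin q → ℂ) ℂ) (σ : G.V → Fin q) : ℂ :=
  -(∑ e : G.E, G.γ e * (if σ (G.ends e).1 = σ (G.ends e).2 then 1 else 0))
    - ∑ v : G.V, ∑ α : Fin q, G.ω v α * (if α = σ v then 1 else 0)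

/-- The variable-field q-state Potts partition function `Z(G) = Σ_σ e^{-β h(σ)}`. -/
noncomputable def pottsZ (q : ℕ) (β : ℂ) (G : WGraph (Fin q → ℂ) ℂ) : ℂ :=
  ∑ σ : G.V → Fin q, Complex.exp (-β * pottsH q G σ)

section FK
open Finset

private lemma resp_of_reachable (q : ℕ) (G : WGraph (Fin q → ℂ) ℂ) (A : Finset G.E)
    (σ : G.V → Fin q) (h : ∀ e ∈ A, σ (G.ends e).1 = σ (G.ends e).2)
    {u v : G.V} (huv : (G.stateGraph A).Reachable u v) : σ u = σ v := by
  obtain ⟨w⟩ := huv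
  induction w with
  | nil => rfl
  | cons hadj _ ih =>
    rw [← ih]
    rcases (SimpleGraph.fromRel_adj _ _ _).1 hadj with ⟨_, ⟨e, he, hee⟩ | ⟨e, he, hee⟩⟩
    · have := h e he; rw [hee] at this; exact this
    · have := h e he; rw [hee] at this; exact this.symm

open scoped Classical in
private lemma sum_resp (q : ℕ) (β : ℂ) (G : WGraph (Fin q → ℂ) ℂ) (A : Finset G.E) :
    ∑ σ ∈ Finset.univ.filter (fun σ : G.V → Fin q =>
        ∀ e ∈ A, σ (G.ends e).1 = σ (G.ends e).2),
      ∏ v : G.V, Complex.exp (β * G.ω v (σ v)) =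
    ∏ c : (G.stateGraph A).ConnectedComponent,
      ∑ α : Fin q, Complex.exp (β * (G.compWeight A c) α) := by
  classical
  rw [Finset.prod_univ_sum]
  have step : ∀ τ : (G.stateGraph A).ConnectedComponent → Fin q,
      (∏ c, Complex.exp (β * (G.compWeight A c) (τ c))) =
      ∏ v : G.V, Complex.exp
        (β * G.ω v (τ ((G.stateGraph A).connectedComponentMk v))) := by
    intro τ
    rw [← Finset.prod_fiberwise Finset.univ
        (fun v => (G.stateGraph A).connectedComponentMk v)
        (fun v => Complex.exp
          (β * G.ω v (τ ((G.stateGraph A).connectedComponentMk v))))]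
    refine Finset.prod_congr rfl fun c _ => ?_
    rw [WGraph.compWeight, Finset.sum_apply, Finset.mul_sum, Complex.exp_sum]
    refine Finset.prod_congr rfl fun v hv => ?_
    rw [(Finset.mem_filter.1 hv).2]
  have hcc : ∀ σ ∈ Finset.univ.filter (fun σ : G.V → Fin q =>
      ∀ e ∈ A, σ (G.ends e).1 = σ (G.ends e).2),
      ∀ u v : G.V, (G.stateGraph A).connectedComponentMk u =
        (G.stateGraph A).connectedComponentMk v → σ u = σ v := by
    intro σ hσ u v huv
    exact resp_of_reachable q G A σ (Finset.mem_filter.1 hσ).2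
      (SimpleGraph.ConnectedComponent.exact huv)
  refine Finset.sum_bij'
    (i := fun σ _ => fun c => σ c.out)
    (j := fun τ _ => fun v => τ ((G.stateGraph A).connectedComponentMk v))
    ?_ ?_ ?_ ?_ ?_
  · intro σ _
    simp
  · intro τ _
    simp only [Finset.mem_filter, Finset.mem_univ, true_and]
    intro e he
    have hcceq : (G.stateGraph A).connectedComponentMk (G.ends e).1 =
        (G.stateGraph A).connectedComponentMk (G.ends e).2 := by
      by_cases hue : (G.ends e).1 = (G.ends e).2
      · rw [hue]
      · exact SimpleGraph.ConnectedComponent.sound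
          ((SimpleGraph.fromRel_adj _ _ _).2 ⟨hue, Or.inl ⟨e, he, rfl⟩⟩).reachable
    exact congrArg τ hcceq
  · intro σ hσ
    funext v
    exact hcc σ hσ _ v (Quot.out_eq _)
  · intro τ _
    funext c
    exact congrArg τ (Quot.out_eq c)
  · intro σ hσ
    show _ = ∏ c, Complex.exp (β * (G.compWeight A c) (σ (Quot.out c)))
    rw [step (fun c => σ (Quot.out c))]
    refine Finset.prod_congr rfl fun v _ => ?_
    rw [hcc σ hσ _ v (Quot.out_eq _)]

end FK

/-- Fortuin–Kasteleyn-type representation: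
`Z(G) = Σ_{A⊆E} X_{M_{C_1}} ⋯ X_{M_{C_{k(A)}}} Π_{e∈A}(e^{βJ_e}-1)`, where `M_{C_l}` is the sum
of the magnetic weight vectors over the l-th component of `(V(G),A)` and `X_M = Σ_α e^{βM_α}`. -/
theorem pottsZ_FK (q : ℕ) (β : ℂ) (G : WGraph (Fin q → ℂ) ℂ) :
    pottsZ q β G =
      ∑ A : Finset G.E,
        (∏ c : (G.stateGraph A).ConnectedComponent,
          ∑ α : Fin q, Complex.exp (β * (G.compWeight A c) α)) *
        ∏ e ∈ A, (Complex.exp (β * G.γ e) - 1) := by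
  classical
  have hδ : ∀ (σ : G.V → Fin q) (e : G.E),
      Complex.exp (β * (G.γ e * (if σ (G.ends e).1 = σ (G.ends e).2 then 1 else 0))) =
      (Complex.exp (β * G.γ e) - 1) *
        (if σ (G.ends e).1 = σ (G.ends e).2 then 1 else 0) + 1 := by
    intro σ e
    by_cases h : σ (G.ends e).1 = σ (G.ends e).2 <;> simp [h]
  have expand : ∀ σ : G.V → Fin q, Complex.exp (-β * pottsH q G σ) =
      ∑ A : Finset G.E,
        ((∏ e ∈ A, ((Complex.exp (β * G.γ e) - 1) *
            (if σ (G.ends e).1 = σ (G.ends e).2 then 1 else 0))) *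
         ∏ v : G.V, Complex.exp (β * G.ω v (σ v))) := by
    intro σ
    have h1 : -β * pottsH q G σ =
        (∑ e : G.E, β * (G.γ e * (if σ (G.ends e).1 = σ (G.ends e).2 then 1 else 0)))
        + ∑ v : G.V, β * G.ω v (σ v) := by
      have hv : ∀ v : G.V,
          (∑ α : Fin q, G.ω v α * (if α = σ v then 1 else 0)) = G.ω v (σ v) := by
        intro v
        rw [Finset.sum_eq_single (σ v)]
        · simp
        · intro b _ hb; simp [hb]
        · simp
      unfold pottsH
      simp only [hv]
      rw [← Finset.mul_sum, ← Finset.mul_sum]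
      ring
    rw [h1, Complex.exp_add, Complex.exp_sum, Complex.exp_sum, ← Finset.sum_mul]
    congr 1
    calc (∏ e : G.E, Complex.exp (β * (G.γ e *
            (if σ (G.ends e).1 = σ (G.ends e).2 then 1 else 0))))
        = ∏ e : G.E, ((Complex.exp (β * G.γ e) - 1) *
            (if σ (G.ends e).1 = σ (G.ends e).2 then 1 else 0) + 1) :=
          Finset.prod_congr rfl fun e _ => hδ σ e
      _ = ∑ A ∈ (Finset.univ : Finset G.E).powerset,
            (∏ e ∈ A, ((Complex.exp (β * G.γ e) - 1) *
              (if σ (G.ends e).1 = σ (G.ends e).2 then 1 else 0))) *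
            ∏ e ∈ Finset.univ \ A, (1 : ℂ) := Finset.prod_add _ _ _
      _ = ∑ A : Finset G.E,
            ∏ e ∈ A, ((Complex.exp (β * G.γ e) - 1) *
              (if σ (G.ends e).1 = σ (G.ends e).2 then 1 else 0)) := by
          rw [Finset.powerset_univ]
          exact Finset.sum_congr rfl fun A _ => by rw [Finset.prod_const_one, mul_one]
  unfold pottsZ
  simp only [expand]
  rw [Finset.sum_comm]
  refine Finset.sum_congr rfl fun A _ => ?_
  have h2 : ∀ σ : G.V → Fin q,
      (∏ e ∈ A, ((Complex.exp (β * G.γ e) - 1) *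
        (if σ (G.ends e).1 = σ (G.ends e).2 then 1 else 0))) =
      (∏ e ∈ A, (Complex.exp (β * G.γ e) - 1)) *
        (if (∀ e ∈ A, σ (G.ends e).1 = σ (G.ends e).2) then 1 else 0) := by
    intro σ
    rw [Finset.prod_mul_distrib, Finset.prod_boole]
    simp
  simp only [h2]
  have h3 : ∀ σ : G.V → Fin q,
      (∏ e ∈ A, (Complex.exp (β * G.γ e) - 1)) *
        (if (∀ e ∈ A, σ (G.ends e).1 = σ (G.ends e).2) then 1 else 0) *
        ∏ v : G.V, Complex.exp (β * G.ω v (σ v)) =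
      (∏ e ∈ A, (Complex.exp (β * G.γ e) - 1)) *
        ((if (∀ e ∈ A, σ (G.ends e).1 = σ (G.ends e).2) then 1 else 0) *
          ∏ v : G.V, Complex.exp (β * G.ω v (σ v))) := fun σ => by ring
  simp only [h3]
  rw [← Finset.mul_sum, mul_comm]
  congr 1
  rw [← sum_resp q β G A, Finset.sum_filter]
  refine Finset.sum_congr rfl fun σ _ => ?_
  by_cases h : ∀ e ∈ A, σ (G.ends e).1 = σ (G.ends e).2 <;> simp [h]
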